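/- For a ∈ ℂ*, a ≠ ±1, and L ≥ 1, the Taylor-expansion morphism s_{a,L} : OA → (ℂ[u]/u^Lℂ[u]) ⊗ sl₂ (expanding Laurent polynomial coefficients around t = a in the variable u = t − a, truncated at order L) is surjective with kernel I_{U_a(t)^L}; hence OA/I_{U_a^L} ≅ (ℂ[u]/u^Lℂ[u]) ⊗ sl₂. -/

import Mathlib

open LaurentPolynomial

noncomputable section

namespace Onsager

attribute [local instance 100] LieRing.ofAssociativeRing

/-- Laurent polynomials over ℂ, i.e. the ring `ℂ[t,t⁻¹]`. -/
abbrev R : Type := LaurentPolynomial ℂ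

/-- The involution `t ↦ t⁻¹` of `ℂ[t,t⁻¹]`. -/
abbrev inv : R ≃ₐ[ℂ] R := LaurentPolynomial.invert

/-- The loop algebra of `gl₂`: 2×2 matrices over `ℂ[t,t⁻¹]`.  The loop algebra
`L(sl₂) = ℂ[t,t⁻¹] ⊗ sl₂` is its Lie subalgebra of traceless matrices. -/
abbrev Loop : Type := Matrix (Fin 2) (Fin 2) R

/-- The standard generator `e` of `sl₂`, viewed inside the loop algebra. -/
def e : Loop := !![0, 1; 0, 0]
/-- The standard generator `f` of `sl₂`. -/
def f : Loop := !![0, 0; 1, 0]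
/-- The standard generator `h` of `sl₂`. -/
def h : Loop := !![1, 0; 0, -1]

/-- The element `p(t)e + q(t)f + r(t)h` of the loop algebra. -/
def elt (p q r : R) : Loop := p • e + q • f + r • h

lemma elt_eq (p q r : R) : elt p q r = !![r, p; q, -r] := by
  ext i j
  fin_cases i <;> fin_cases j <;> simp [elt, e, f, h]

/-- The swap matrix implementing the involution `θ` of `sl₂`. -/
def Sw : Loop := !![0, 1; 1, 0]

/-- The involution `θ̂` of the loop algebra, `θ̂(p(t) ⊗ x) = p(t⁻¹) ⊗ θ(x)`,
where `θ(e) = f`, `θ(f) = e`, `θ(h) = -h`. -/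
def thetaHat (x : Loop) : Loop := Sw * x.map inv * Sw

lemma Sw_mul_Sw : Sw * Sw = 1 := by
  ext i j
  fin_cases i <;> fin_cases j <;>
    simp [Sw, Matrix.mul_apply, Fin.sum_univ_two, Matrix.one_apply]

lemma map_inv_eq (x : Loop) : x.map inv = (AlgEquiv.mapMatrix (R := ℂ) inv) x := rfl

lemma thetaHat_mul (x y : Loop) : thetaHat (x * y) = thetaHat x * thetaHat y := by
  simp only [thetaHat, map_inv_eq, map_mul]
  calc Sw * (inv.mapMatrix x * inv.mapMatrix y) * Sw
      = Sw * inv.mapMatrix x * (Sw * Sw) * (inv.mapMatrix y * Sw) := by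
        rw [Sw_mul_Sw]; noncomm_ring
    _ = Sw * inv.mapMatrix x * Sw * (Sw * (inv.mapMatrix y * Sw)) := by noncomm_ring
    _ = _ := by noncomm_ring

lemma thetaHat_add (x y : Loop) : thetaHat (x + y) = thetaHat x + thetaHat y := by
  simp only [thetaHat, map_inv_eq, map_add, mul_add, add_mul]

lemma thetaHat_sub (x y : Loop) : thetaHat (x - y) = thetaHat x - thetaHat y := by
  simp only [thetaHat, map_inv_eq, map_sub, mul_sub, sub_mul]

lemma thetaHat_smul (c : ℂ) (x : Loop) : thetaHat (c • x) = c • thetaHat x := by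
  simp only [thetaHat, map_inv_eq, map_smul, Matrix.smul_mul, Matrix.mul_smul]

/-- The Onsager algebra, realized as the subalgebra of the loop algebra of `sl₂`
fixed by the involution `θ̂`. -/
def OASub : LieSubalgebra ℂ Loop where
  carrier := {x | thetaHat x = x ∧ Matrix.trace x = 0}
  add_mem' := by
    rintro x y ⟨hx1, hx2⟩ ⟨hy1, hy2⟩
    exact ⟨by rw [thetaHat_add, hx1, hy1], by simp [hx2, hy2]⟩
  zero_mem' := by
    constructor
    · have := thetaHat_smul 0 0
      simpa using this
    · simp
  smul_mem' := by
    rintro c x ⟨hx1, hx2⟩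
    exact ⟨by rw [thetaHat_smul, hx1], by simp [hx2]⟩
  lie_mem' := by
    rintro x y ⟨hx1, hx2⟩ ⟨hy1, hy2⟩
    constructor
    · rw [Ring.lie_def, thetaHat_sub, thetaHat_mul, thetaHat_mul, hx1, hy1]
    · rw [Ring.lie_def]
      simp [Matrix.trace_mul_comm x y]

/-- The Onsager algebra as a type (a Lie algebra over ℂ). -/
abbrev OA : Type := ↥OASub

/-- For a polynomial `P(t)`, the ideal `I_P` of the Onsager algebra consisting of the
elements `p(t)e + p(t⁻¹)f + q(t)h` with `P | p` and `P | q`. -/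
def IP (P : Polynomial ℂ) : LieIdeal ℂ OA where
  carrier := {X | ∀ i j, P.toLaurent ∣ (X : Loop) i j}
  add_mem' := by
    intro x y hx hy i j
    simpa using dvd_add (hx i j) (hy i j)
  zero_mem' := by intro i j; simp
  smul_mem' := by
    intro c x hx i j
    have : ((c • x : OA) : Loop) i j = c • ((x : Loop) i j) := rfl
    rw [this, Algebra.smul_def]
    exact (hx i j).mul_left _
  lie_mem := by
    intro x m hm i j
    have hco : ((⁅x, m⁆ : OA) : Loop) = ⁅(x : Loop), (m : Loop)⁆ := rfl
    rw [hco, Ring.lie_def]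
    have h1 : P.toLaurent ∣ ((x : Loop) * (m : Loop)) i j := by
      rw [Matrix.mul_apply]
      exact Finset.dvd_sum fun k _ => (hm k j).mul_left _
    have h2 : P.toLaurent ∣ ((m : Loop) * (x : Loop)) i j := by
      rw [Matrix.mul_apply]
      exact Finset.dvd_sum fun k _ => (hm i k).mul_right _
    simpa using dvd_sub h1 h2

/-- A nonconstant monic polynomial `P` of degree `d` is *reciprocal* if
`P(t) = ± t^d P(t⁻¹)`. -/
def IsReciprocal (P : Polynomial ℂ) : Prop :=
  P.Monic ∧ 0 < P.natDegree ∧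
    (P.toLaurent = T (P.natDegree : ℤ) * inv P.toLaurent ∨
     P.toLaurent = -(T (P.natDegree : ℤ) * inv P.toLaurent))

/-- The elementary reciprocal polynomial `U_a`. -/
def U (a : ℂ) : Polynomial ℂ :=
  if a = 1 ∨ a = -1 then Polynomial.X - Polynomial.C a
  else Polynomial.X ^ 2 - Polynomial.C (a + a⁻¹) * Polynomial.X + 1

/-- Evaluation of a Laurent polynomial at a nonzero complex number. -/
def evalL (a : ℂ) (p : R) : ℂ := p.coeff.sum fun n c => c * a ^ n

/-- Evaluation `ev_a` of loop-algebra elements at `t = a`. -/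
def ev (a : ℂ) (x : Loop) : Matrix (Fin 2) (Fin 2) ℂ := x.map (evalL a)

/-- The element `A_m = 2t^m e + 2t^{-m} f` of the loop algebra. -/
def AmL (m : ℤ) : Loop := elt (2 * T m) (2 * T (-m)) 0

/-- The element `G_m = (t^m - t^{-m}) h` of the loop algebra. -/
def GmL (m : ℤ) : Loop := elt 0 0 (T m - T (-m))

lemma thetaHat_elt (p q r : R) :
    thetaHat (elt p q r) = elt (inv q) (inv p) (-(inv r)) := by
  rw [elt_eq, elt_eq]
  have hmap : (!![r, p; q, -r] : Loop).map ⇑inv = !![inv r, inv p; inv q, -(inv r)] := by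
    ext i j
    fin_cases i <;> fin_cases j <;> simp [Matrix.map_apply]
  rw [thetaHat, hmap, Sw]
  ext i j
  fin_cases i <;> fin_cases j <;>
    simp [Matrix.mul_apply, Fin.sum_univ_two]

lemma elt_mem (p r : R) (hr : inv r = -r) : elt p (inv p) r ∈ OASub := by
  constructor
  · rw [thetaHat_elt, hr, neg_neg, LaurentPolynomial.involutive_invert p]
  · rw [elt_eq]
    simp [Matrix.trace_fin_two]

/-- `A_m` as an element of the Onsager algebra. -/
def Am (m : ℤ) : OA :=
  ⟨AmL m, by
    have h2 : inv (2 * T m : R) = 2 * T (-m) := by simp [map_ofNat]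
    have hm := elt_mem (2 * T m) 0 (by simp)
    rw [h2] at hm
    exact hm⟩

/-- `G_m` as an element of the Onsager algebra. -/
def Gm (m : ℤ) : OA :=
  ⟨GmL m, by
    have hm := elt_mem 0 (T m - T (-m)) (by simp [neg_sub])
    rw [map_zero] at hm
    exact hm⟩

/-- The truncated polynomial ring `ℂ[u]/u^L ℂ[u]`. -/
abbrev AL (L : ℕ) : Type := Polynomial ℂ ⧸ Ideal.span {(Polynomial.X : Polynomial ℂ) ^ L}

/-- The class of the variable `u` in `ℂ[u]/u^L`. -/
def uBar (L : ℕ) : AL L := Ideal.Quotient.mk _ Polynomial.X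

lemma isUnit_a_add_uBar (a : ℂ) (ha : a ≠ 0) (L : ℕ) :
    IsUnit (algebraMap ℂ (AL L) a + uBar L) := by
  have hnil : IsNilpotent (uBar L) :=
    ⟨L, by
      rw [uBar, ← map_pow]
      exact Ideal.Quotient.eq_zero_iff_mem.2 (Ideal.subset_span (Set.mem_singleton _))⟩
  have hu : IsUnit (algebraMap ℂ (AL L) a) := (IsUnit.mk0 a ha).map (algebraMap ℂ (AL L))
  exact hnil.isUnit_add_left_of_commute hu (Commute.all _ _)

/-- The Taylor-expansion morphism `s_{a,L} : ℂ[t,t⁻¹] → ℂ[u]/u^L` around `t = a`,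
`u = t - a`: the unique `ℂ`-algebra map sending `t` to `a + u` (a unit of `ℂ[u]/u^L`).
Its value on `p(t)` is the truncation of `Σ_j p⁽ʲ⁾(a) uʲ/j!`. -/
def sMap (a : ℂ) (ha : a ≠ 0) (L : ℕ) : R →ₐ[ℂ] AL L :=
  AddMonoidAlgebra.lift ℂ (AL L) ℤ
    ((Units.coeHom (AL L)).comp (zpowersHom (AL L)ˣ (isUnit_a_add_uBar a ha L).unit))

/-- `s_{a,L}` applied entrywise to the loop algebra. -/
def sL (a : ℂ) (ha : a ≠ 0) (L : ℕ) (x : Loop) : Matrix (Fin 2) (Fin 2) (AL L) :=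
  x.map (sMap a ha L)

/-- `sl₂` with coefficients in a commutative `ℂ`-algebra `A`:
the Lie algebra of traceless 2×2 matrices over `A`, i.e. `A ⊗ sl₂`. -/
def sl2A (A : Type*) [CommRing A] [Algebra ℂ A] :
    LieSubalgebra ℂ (Matrix (Fin 2) (Fin 2) A) where
  carrier := {x | Matrix.trace x = 0}
  add_mem' := by
    intro x y hx hy
    simp only [Set.mem_setOf_eq] at *
    simp [hx, hy]
  zero_mem' := by simp
  smul_mem' := by
    intro c x hx
    simp only [Set.mem_setOf_eq] at *
    simp [hx]
  lie_mem' := by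
    intro x y hx hy
    simp only [Set.mem_setOf_eq] at *
    rw [Ring.lie_def]
    simp [Matrix.trace_mul_comm x y]

section Aux

variable (a : ℂ) (ha : a ≠ 0) (L : ℕ)

lemma sMap_T (n : ℤ) :
    sMap a ha L (T n) = ((isUnit_a_add_uBar a ha L).unit ^ n : (AL L)ˣ) := by
  rw [sMap, LaurentPolynomial.T, AddMonoidAlgebra.lift_single]
  rw [one_smul]
  rfl
end Aux

lemma sMap_T_isUnit (a : ℂ) (ha : a ≠ 0) (L : ℕ) (n : ℤ) : IsUnit (sMap a ha L (T n)) := by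
  rw [sMap_T]; exact Units.isUnit _
lemma algebraMap_AL (c : ℂ) (L : ℕ) :
    algebraMap ℂ (AL L) c = Ideal.Quotient.mk _ (Polynomial.C c) := rfl

lemma sMap_toLaurent (a : ℂ) (ha : a ≠ 0) (L : ℕ) (q : Polynomial ℂ) :
    sMap a ha L q.toLaurent =
      Ideal.Quotient.mk _ (q.comp (Polynomial.X + Polynomial.C a)) := by
  have key : (sMap a ha L).comp (Polynomial.toLaurentAlg (R := ℂ))
      = (Ideal.Quotient.mkₐ ℂ (Ideal.span {(Polynomial.X : Polynomial ℂ) ^ L})).comp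
          (Polynomial.aeval (Polynomial.X + Polynomial.C a)) := by
    apply Polynomial.algHom_ext
    rw [AlgHom.comp_apply, AlgHom.comp_apply, Polynomial.toLaurentAlg_apply,
      Polynomial.toLaurent_X, sMap_T]
    rw [zpow_one, IsUnit.unit_spec, Polynomial.aeval_X, Ideal.Quotient.mkₐ_eq_mk,
      map_add, add_comm, ← algebraMap_AL]
    rfl
  have := DFunLike.congr_fun key q
  simp only [AlgHom.coe_comp, Function.comp_apply, Polynomial.toLaurentAlg_apply,
    Ideal.Quotient.mkₐ_eq_mk] at this
  rw [this, ← Polynomial.comp_eq_aeval]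
lemma comp_dvd {s t r : Polynomial ℂ} (h : s ∣ t) : s.comp r ∣ t.comp r := by
  obtain ⟨u, hu⟩ := h
  exact ⟨u.comp r, by rw [hu, Polynomial.mul_comp]⟩

lemma sMap_toLaurent_eq_zero (a : ℂ) (ha : a ≠ 0) (L : ℕ) (q : Polynomial ℂ) :
    sMap a ha L q.toLaurent = 0 ↔ (Polynomial.X - Polynomial.C a) ^ L ∣ q := by
  rw [sMap_toLaurent, Ideal.Quotient.eq_zero_iff_mem, Ideal.mem_span_singleton]
  constructor
  · intro h
    have h2 := comp_dvd (r := Polynomial.X - Polynomial.C a) h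
    rwa [Polynomial.X_pow_comp, Polynomial.comp_assoc, Polynomial.add_comp,
      Polynomial.X_comp, Polynomial.C_comp, sub_add_cancel, Polynomial.comp_X] at h2
  · intro h
    have h2 := comp_dvd (r := Polynomial.X + Polynomial.C a) h
    rwa [Polynomial.pow_comp, Polynomial.sub_comp, Polynomial.X_comp,
      Polynomial.C_comp, add_sub_cancel_right] at h2

lemma toLaurent_dvd_iff (P : Polynomial ℂ) (hP : ¬ ((Polynomial.X : Polynomial ℂ) ∣ P))
    (p : R) (n : ℕ) (q : Polynomial ℂ) (hq : q.toLaurent = p * T n) :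
    P.toLaurent ∣ p ↔ P ∣ q := by
  have hpq : p = q.toLaurent * T (-(n : ℤ)) := by
    rw [hq, mul_assoc, ← T_add, add_neg_cancel, T_zero, mul_one]
  constructor
  · intro h
    obtain ⟨r, hr⟩ : P.toLaurent ∣ q.toLaurent := by
      rw [hq]; exact h.mul_right _
    obtain ⟨m, s, hs⟩ := LaurentPolynomial.exists_T_pow r
    have : Polynomial.toLaurent (q * Polynomial.X ^ m) = Polynomial.toLaurent (P * s) := by
      rw [map_mul, map_mul, Polynomial.toLaurent_X_pow, hs, hr, mul_assoc]
    have heq : q * Polynomial.X ^ m = P * s := Polynomial.toLaurent_injective this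
    have hcop : IsCoprime P ((Polynomial.X : Polynomial ℂ) ^ m) :=
      ((Polynomial.prime_X.coprime_iff_not_dvd).2 hP).symm.pow_right
    exact hcop.dvd_of_dvd_mul_right ⟨s, heq⟩
  · intro h
    rw [hpq]
    exact ((Polynomial.toLaurent (R := ℂ)).map_dvd h).mul_right _
lemma sMap_eq_zero_iff (a : ℂ) (ha : a ≠ 0) (L : ℕ) (p : R) :
    sMap a ha L p = 0 ↔
      Polynomial.toLaurent ((Polynomial.X - Polynomial.C a) ^ L) ∣ p := by
  obtain ⟨n, q, hq⟩ := LaurentPolynomial.exists_T_pow p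
  have hX : ¬ ((Polynomial.X : Polynomial ℂ) ∣ (Polynomial.X - Polynomial.C a) ^ L) := by
    intro h
    have h2 := Polynomial.prime_X.dvd_of_dvd_pow h
    rw [Polynomial.X_dvd_iff] at h2
    simp only [Polynomial.coeff_sub, Polynomial.coeff_X_zero, Polynomial.coeff_C_zero,
      zero_sub, neg_eq_zero] at h2
    exact ha h2
  have h1 : sMap a ha L p = 0 ↔ sMap a ha L q.toLaurent = 0 := by
    rw [hq, map_mul]
    exact ((sMap_T_isUnit a ha L n).mul_left_eq_zero).symm
  rw [h1, sMap_toLaurent_eq_zero]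
  exact (toLaurent_dvd_iff _ hX p n q hq).symm

lemma invert_X_sub_C (b : ℂ) (hb : b ≠ 0) :
    inv (Polynomial.toLaurent (Polynomial.X - Polynomial.C b)) =
      (-(LaurentPolynomial.C b) * T (-1)) *
        Polynomial.toLaurent (Polynomial.X - Polynomial.C b⁻¹) := by
  have hL : Polynomial.toLaurent (Polynomial.X - Polynomial.C b) = T 1 - LaurentPolynomial.C b := by
    rw [map_sub, Polynomial.toLaurent_X, Polynomial.toLaurent_C]
  have hR : Polynomial.toLaurent (Polynomial.X - Polynomial.C b⁻¹) = T 1 - LaurentPolynomial.C b⁻¹ := by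
    rw [map_sub, Polynomial.toLaurent_X, Polynomial.toLaurent_C]
  rw [hL, hR, map_sub, LaurentPolynomial.invert_T, LaurentPolynomial.invert_C]
  have hbb : (LaurentPolynomial.C b) * LaurentPolynomial.C b⁻¹ = 1 := by
    rw [← map_mul, mul_inv_cancel₀ hb, map_one]
  have h1 : (T (-1) : R) * T 1 = 1 := by
    rw [← T_add]; norm_num
  linear_combination (LaurentPolynomial.C b) * h1 - T (-1 : ℤ) * hbb

lemma unit_mul_dvd_iff {u w x p : R} (huw : u * w = 1) : u * x ∣ p ↔ x ∣ p := by
  constructor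
  · exact fun h => (dvd_mul_left x u).trans h
  · intro h
    refine dvd_trans ⟨w, ?_⟩ h
    rw [mul_right_comm, huw, one_mul]

lemma invert_dvd_iff (a : ℂ) (ha : a ≠ 0) (L : ℕ) (p : R) :
    Polynomial.toLaurent ((Polynomial.X - Polynomial.C a) ^ L) ∣ inv p ↔
      Polynomial.toLaurent ((Polynomial.X - Polynomial.C a⁻¹) ^ L) ∣ p := by
  have key : inv (Polynomial.toLaurent ((Polynomial.X - Polynomial.C a) ^ L)) =
      ((-(LaurentPolynomial.C a) * T (-1)) ^ L) *
        Polynomial.toLaurent ((Polynomial.X - Polynomial.C a⁻¹) ^ L) := by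
    rw [map_pow, map_pow, invert_X_sub_C a ha, mul_pow, map_pow]
  have huw : ((-(LaurentPolynomial.C a) * T (-1)) ^ L) *
      ((-(LaurentPolynomial.C a⁻¹) * T 1) ^ L) = 1 := by
    rw [← mul_pow]
    have : (-(LaurentPolynomial.C a) * T (-1)) * (-(LaurentPolynomial.C a⁻¹) * T 1) = 1 := by
      have hbb : (LaurentPolynomial.C a) * LaurentPolynomial.C a⁻¹ = 1 := by
        rw [← map_mul, mul_inv_cancel₀ ha, map_one]
      have h1 : (T (-1) : R) * T 1 = 1 := by rw [← T_add]; norm_num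
      linear_combination (LaurentPolynomial.C a * LaurentPolynomial.C a⁻¹) * h1 + hbb
    rw [this, one_pow]
  constructor
  · intro h
    have h2 := map_dvd (inv : R ≃ₐ[ℂ] R) h
    rw [LaurentPolynomial.involutive_invert p, key] at h2
    exact (unit_mul_dvd_iff huw).1 h2
  · intro h
    rw [← LaurentPolynomial.involutive_invert p] at h
    have h2 := map_dvd (inv : R ≃ₐ[ℂ] R) h
    rw [LaurentPolynomial.involutive_invert (inv p)] at h2
    have h3 : inv (Polynomial.toLaurent ((Polynomial.X - Polynomial.C a⁻¹) ^ L)) =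
        ((-(LaurentPolynomial.C a⁻¹) * T (-1)) ^ L) *
          Polynomial.toLaurent ((Polynomial.X - Polynomial.C a⁻¹⁻¹) ^ L) := by
      rw [map_pow, map_pow, invert_X_sub_C a⁻¹ (inv_ne_zero ha), mul_pow, map_pow]
    rw [h3, inv_inv] at h2
    have huw' : ((-(LaurentPolynomial.C a⁻¹) * T (-1)) ^ L) *
        ((-(LaurentPolynomial.C a) * T 1) ^ L) = 1 := by
      rw [← mul_pow]
      have hbb : (LaurentPolynomial.C a⁻¹) * LaurentPolynomial.C a = 1 := by
        rw [← map_mul, inv_mul_cancel₀ ha, map_one]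
      have h1 : (T (-1) : R) * T 1 = 1 := by rw [← T_add]; norm_num
      have : (-(LaurentPolynomial.C a⁻¹) * T (-1)) * (-(LaurentPolynomial.C a) * T 1) = 1 := by
        linear_combination (LaurentPolynomial.C a⁻¹ * LaurentPolynomial.C a) * h1 + hbb
      rw [this, one_pow]
    exact (unit_mul_dvd_iff huw').1 h2

lemma sMap_invert_eq_zero_iff (a : ℂ) (ha : a ≠ 0) (L : ℕ) (p : R) :
    sMap a ha L (inv p) = 0 ↔
      Polynomial.toLaurent ((Polynomial.X - Polynomial.C a⁻¹) ^ L) ∣ p := by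
  rw [sMap_eq_zero_iff, invert_dvd_iff a ha]
lemma a_ne_inv (a : ℂ) (ha0 : a ≠ 0) (ha1 : a ≠ 1) (ha2 : a ≠ -1) : a ≠ a⁻¹ := by
  intro h
  have h2 : a * a = 1 := by nth_rewrite 2 [h]; exact mul_inv_cancel₀ ha0
  have h3 : (a - 1) * (a + 1) = 0 := by linear_combination h2
  rcases mul_eq_zero.1 h3 with h4 | h4
  · exact ha1 (sub_eq_zero.1 h4)
  · exact ha2 (eq_neg_of_add_eq_zero_left h4)

lemma coprime_pow (a : ℂ) (ha0 : a ≠ 0) (ha1 : a ≠ 1) (ha2 : a ≠ -1) (L : ℕ) :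
    IsCoprime ((Polynomial.X - Polynomial.C a) ^ L)
      ((Polynomial.X - Polynomial.C a⁻¹) ^ L) :=
  (Polynomial.isCoprime_X_sub_C_of_isUnit_sub
    ((sub_ne_zero.2 (a_ne_inv a ha0 ha1 ha2)).isUnit)).pow

lemma U_eq (a : ℂ) (ha0 : a ≠ 0) (ha1 : a ≠ 1) (ha2 : a ≠ -1) :
    U a = (Polynomial.X - Polynomial.C a) * (Polynomial.X - Polynomial.C a⁻¹) := by
  rw [U, if_neg (by push_neg; exact ⟨ha1, ha2⟩)]
  have h1 : (Polynomial.C a) * Polynomial.C a⁻¹ = 1 := by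
    rw [← Polynomial.C_mul, mul_inv_cancel₀ ha0, Polynomial.C_1]
  have h2 : Polynomial.C (a + a⁻¹) = Polynomial.C a + Polynomial.C a⁻¹ := map_add _ _ _
  linear_combination (-Polynomial.X) * h2 - h1

lemma X_not_dvd_pow (b : ℂ) (hb : b ≠ 0) (L : ℕ) :
    ¬ ((Polynomial.X : Polynomial ℂ) ∣ (Polynomial.X - Polynomial.C b) ^ L) := by
  intro h
  have h2 := Polynomial.prime_X.dvd_of_dvd_pow h
  rw [Polynomial.X_dvd_iff] at h2
  simp only [Polynomial.coeff_sub, Polynomial.coeff_X_zero, Polynomial.coeff_C_zero,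
    zero_sub, neg_eq_zero] at h2
  exact hb h2

lemma dvd_U_pow_iff (a : ℂ) (ha0 : a ≠ 0) (ha1 : a ≠ 1) (ha2 : a ≠ -1) (L : ℕ) (p : R) :
    Polynomial.toLaurent ((U a) ^ L) ∣ p ↔
      (Polynomial.toLaurent ((Polynomial.X - Polynomial.C a) ^ L) ∣ p ∧
       Polynomial.toLaurent ((Polynomial.X - Polynomial.C a⁻¹) ^ L) ∣ p) := by
  obtain ⟨n, q, hq⟩ := LaurentPolynomial.exists_T_pow p
  have hXU : ¬ ((Polynomial.X : Polynomial ℂ) ∣ (U a) ^ L) := by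
    rw [Polynomial.X_dvd_iff, Polynomial.coeff_zero_eq_eval_zero, Polynomial.eval_pow,
      U_eq a ha0 ha1 ha2, Polynomial.eval_mul]
    simp [ha0, inv_ne_zero ha0, sub_eq_zero]
  rw [toLaurent_dvd_iff _ hXU p n q hq, toLaurent_dvd_iff _ (X_not_dvd_pow a ha0 L) p n q hq,
      toLaurent_dvd_iff _ (X_not_dvd_pow a⁻¹ (inv_ne_zero ha0) L) p n q hq,
      U_eq a ha0 ha1 ha2, mul_pow]
  constructor
  · intro h
    exact ⟨(dvd_mul_right _ _).trans h, (dvd_mul_left _ _).trans h⟩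
  · rintro ⟨h1, h2⟩
    exact (coprime_pow a ha0 ha1 ha2 L).mul_dvd h1 h2
lemma thetaHat_apply (M : Loop) (i j : Fin 2) :
    thetaHat M i j = inv (M (1 - i) (1 - j)) := by
  fin_cases i <;> fin_cases j <;>
    simp [thetaHat, Sw, Matrix.mul_apply, Matrix.vecMul, dotProduct,
      Fin.sum_univ_two, Matrix.map_apply]

lemma OA_entry_symm (X : OA) (i j : Fin 2) :
    (X : Loop) i j = inv ((X : Loop) (1 - i) (1 - j)) := by
  have h := X.2.1
  have h2 := congrFun (congrFun h i) j
  rw [thetaHat_apply] at h2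
  exact h2.symm

/-- Part 1: kernel characterization. -/
lemma kernel_part (a : ℂ) (ha0 : a ≠ 0) (ha1 : a ≠ 1) (ha2 : a ≠ -1) (L : ℕ) (X : OA) :
    sL a ha0 L (X : Loop) = 0 ↔ X ∈ IP (U a ^ L) := by
  have hmem : X ∈ IP (U a ^ L) ↔
      ∀ i j, Polynomial.toLaurent ((U a) ^ L) ∣ (X : Loop) i j := Iff.rfl
  rw [hmem]
  constructor
  · intro h i j
    have hz : ∀ i' j', sMap a ha0 L ((X : Loop) i' j') = 0 := by
      intro i' j'
      have := congrFun (congrFun h i') j'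
      simpa [sL, Matrix.map_apply] using this
    rw [dvd_U_pow_iff a ha0 ha1 ha2]
    refine ⟨(sMap_eq_zero_iff a ha0 L _).1 (hz i j), ?_⟩
    have h1 : Polynomial.toLaurent ((Polynomial.X - Polynomial.C a) ^ L) ∣
        (X : Loop) (1 - i) (1 - j) := (sMap_eq_zero_iff a ha0 L _).1 (hz _ _)
    rw [OA_entry_symm X (1 - i) (1 - j)] at h1
    simp only [show (1 : Fin 2) - (1 - i) = i by omega, show (1 : Fin 2) - (1 - j) = j by omega] at h1
    exact (invert_dvd_iff a ha0 L _).1 h1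
  · intro h
    ext i j
    simp only [sL, Matrix.map_apply, Matrix.zero_apply]
    rw [sMap_eq_zero_iff a ha0 L]
    exact ((dvd_U_pow_iff a ha0 ha1 ha2 L _).1 (h i j)).1
lemma sMap_surjective (a : ℂ) (ha : a ≠ 0) (L : ℕ) : Function.Surjective (sMap a ha L) := by
  intro ybar
  obtain ⟨y₀, rfl⟩ := Ideal.Quotient.mk_surjective ybar
  refine ⟨Polynomial.toLaurent (y₀.comp (Polynomial.X - Polynomial.C a)), ?_⟩
  rw [sMap_toLaurent, Polynomial.comp_assoc, Polynomial.sub_comp, Polynomial.X_comp,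
    Polynomial.C_comp, add_sub_cancel_right, Polynomial.comp_X]

lemma joint_surjective (a : ℂ) (ha0 : a ≠ 0) (ha1 : a ≠ 1) (ha2 : a ≠ -1) (L : ℕ)
    (y z : AL L) : ∃ p : R, sMap a ha0 L p = y ∧ sMap a ha0 L (inv p) = z := by
  obtain ⟨c, d, hcd⟩ := coprime_pow a ha0 ha1 ha2 L
  set g : R := Polynomial.toLaurent (d * (Polynomial.X - Polynomial.C a⁻¹) ^ L) with hg
  have hg1 : sMap a ha0 L g = 1 := by
    have hmap := congrArg (fun w => sMap a ha0 L (Polynomial.toLaurent w)) hcd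
    simp only [map_add, map_mul, map_one] at hmap
    have hz : sMap a ha0 L (Polynomial.toLaurent ((Polynomial.X - Polynomial.C a) ^ L)) = 0 :=
      (sMap_eq_zero_iff a ha0 L _).2 dvd_rfl
    rw [hz, mul_zero, zero_add] at hmap
    rw [hg, map_mul, map_mul]
    exact hmap
  have hg0 : sMap a ha0 L (inv g) = 0 := by
    refine (sMap_invert_eq_zero_iff a ha0 L g).2 ?_
    rw [hg, map_mul]
    exact dvd_mul_left _ _
  obtain ⟨y₁, hy⟩ := sMap_surjective a ha0 L y
  obtain ⟨z₁, hz⟩ := sMap_surjective a ha0 L z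
  refine ⟨y₁ * g + inv (z₁ * g), ?_, ?_⟩
  · have h1 : inv (z₁ * g) = inv z₁ * inv g := map_mul _ _ _
    rw [map_add, map_mul, hy, hg1, mul_one, h1, map_mul, hg0, mul_zero, add_zero]
  · have h2 : inv (y₁ * g + inv (z₁ * g)) = inv y₁ * inv g + z₁ * g := by
      rw [map_add, map_mul, LaurentPolynomial.involutive_invert]
    rw [h2, map_add, map_mul, map_mul, hg0, mul_zero, zero_add, hz, hg1, mul_one]

lemma range_part (a : ℂ) (ha0 : a ≠ 0) (ha1 : a ≠ 1) (ha2 : a ≠ -1) (L : ℕ) :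
    Set.range (fun X : OA => sL a ha0 L (X : Loop)) =
      {x : Matrix (Fin 2) (Fin 2) (AL L) | Matrix.trace x = 0} := by
  ext M
  constructor
  · rintro ⟨X, rfl⟩
    have htr : Matrix.trace (X : Loop) = 0 := X.2.2
    have key : Matrix.trace (sL a ha0 L (X : Loop)) = sMap a ha0 L (Matrix.trace (X : Loop)) := by
      rw [Matrix.trace_fin_two, Matrix.trace_fin_two, map_add]
      rfl
    simp only [Set.mem_setOf_eq]
    rw [key, htr, map_zero]
  · intro hM
    rw [Set.mem_setOf_eq] at hM
    rw [Matrix.trace_fin_two] at hM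
    have hM11 : M 1 1 = -(M 0 0) := by
      rw [eq_neg_iff_add_eq_zero, add_comm]
      exact hM
    obtain ⟨p, hp1, hp2⟩ := joint_surjective a ha0 ha1 ha2 L (M 0 1) (M 1 0)
    obtain ⟨s, hs1, hs2⟩ := joint_surjective a ha0 ha1 ha2 L (M 0 0) (-(M 0 0))
    set r : R := (2⁻¹ : ℂ) • (s - inv s) with hr
    have hrinv : inv r = -r := by
      rw [hr, map_smul, map_sub, LaurentPolynomial.involutive_invert, ← smul_neg, neg_sub]
    have hsr : sMap a ha0 L r = M 0 0 := by
      rw [hr, map_smul, map_sub, hs1, hs2, sub_neg_eq_add, ← two_smul ℂ, smul_smul]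
      norm_num
    refine ⟨⟨elt p (inv p) r, elt_mem p r hrinv⟩, ?_⟩
    show sL a ha0 L (elt p (inv p) r) = M
    rw [elt_eq]
    ext i j
    fin_cases i <;> fin_cases j <;>
      simp [sL, Matrix.map_apply, hp1, hp2, hsr, hM11, map_neg]
/-- The morphism `s_{a,L}` as a morphism of Lie algebras `OA → gl₂(ℂ[u]/u^L)`. -/
def phi (a : ℂ) (ha : a ≠ 0) (L : ℕ) : OA →ₗ⁅ℂ⁆ Matrix (Fin 2) (Fin 2) (AL L) :=
  ((AlgHom.mapMatrix (sMap a ha L)).toLieHom).comp OASub.incl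

lemma phi_apply (a : ℂ) (ha : a ≠ 0) (L : ℕ) (X : OA) :
    phi a ha L X = sL a ha L (X : Loop) := rfl
/-- **Proposition 1 and Theorem 3 of Date–Roan.**  For `a ≠ 0, ±1` and `L ≥ 1` the
morphism `s_{a,L} : OA → (ℂ[u]/u^L) ⊗ sl₂` has kernel `I_{U_a^L}` and is surjective
onto the traceless matrices; hence `OA/I_{U_a^L} ≅ (ℂ[u]/u^L ℂ[u]) ⊗ sl₂`. -/
theorem sL_kernel_image_iso (a : ℂ) (ha0 : a ≠ 0) (ha1 : a ≠ 1) (ha2 : a ≠ -1)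
    (L : ℕ) (hL : 1 ≤ L) :
    (∀ X : OA, sL a ha0 L (X : Loop) = 0 ↔ X ∈ IP (U a ^ L)) ∧
    Set.range (fun X : OA => sL a ha0 L (X : Loop)) =
      {x : Matrix (Fin 2) (Fin 2) (AL L) | Matrix.trace x = 0} ∧
    Nonempty ((OA ⧸ IP (U a ^ L)) ≃ₗ⁅ℂ⁆ ↥(sl2A (AL L))) := by
  refine ⟨kernel_part a ha0 ha1 ha2 L, range_part a ha0 ha1 ha2 L, ?_⟩
  have hker : (phi a ha0 L).ker = IP (U a ^ L) := by
    ext X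
    rw [LieHom.mem_ker, phi_apply]
    exact kernel_part a ha0 ha1 ha2 L X
  have hrange : ((phi a ha0 L).range : Set (Matrix (Fin 2) (Fin 2) (AL L))) =
      (sl2A (AL L) : Set (Matrix (Fin 2) (Fin 2) (AL L))) := by
    have h := range_part a ha0 ha1 ha2 L
    ext x
    simp only [SetLike.mem_coe, LieHom.mem_range]
    constructor
    · rintro ⟨X, rfl⟩
      have : sL a ha0 L (X : Loop) ∈ Set.range (fun X : OA => sL a ha0 L (X : Loop)) :=
        ⟨X, rfl⟩
      rw [h] at this
      exact this
    · intro hx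
      have : x ∈ Set.range (fun X : OA => sL a ha0 L (X : Loop)) := by
        rw [h]; exact hx
      obtain ⟨X, hX⟩ := this
      exact ⟨X, hX⟩
  rw [← hker]
  exact ⟨(phi a ha0 L).quotKerEquivRange.trans (LieEquiv.ofEq _ _ hrange)⟩

end Onsager
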